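/- Let k ≥ 1, let x_1, …, x_k be distinct real numbers, and let f : ℝ → ℝ be k times continuously differentiable. If f(x_j) = 0 for all j = 1, …, k, then there exists ξ ∈ [min_j x_j, max_j x_j] such that f′(x_1) = (f^{(k)}(ξ) / k!) · ∏_{j=2}^k (x_1 − x_j). -/

import Mathlib

open Polynomial in
lemma my_contDiff_eval (p : ℝ[X]) {n : WithTop ℕ∞} : ContDiff ℝ n fun t : ℝ => p.eval t := by
  induction p using Polynomial.induction_on' with
  | add p q hp hq => simpa using hp.add hq
  | monomial m a => simpa [Polynomial.eval_monomial] using contDiff_const.mul (contDiff_id.pow m)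

open Polynomial in
lemma my_iteratedDeriv_sub_poly : ∀ (n : ℕ) (f : ℝ → ℝ), ContDiff ℝ n f → ∀ (p : ℝ[X]) (t : ℝ),
    iteratedDeriv n (fun s => f s - p.eval s) t
      = iteratedDeriv n f t - (derivative^[n] p).eval t := by
  intro n
  induction n with
  | zero => intro f _ p t; simp
  | succ n ih =>
    intro f hf p t
    have hf' : ContDiff ℝ ((n : WithTop ℕ∞) + 1) f := by exact_mod_cast hf
    have hdf : Differentiable ℝ f := hf'.differentiable (by exact_mod_cast n.succ_ne_zero)
    have hdg : ContDiff ℝ n (deriv f) := (contDiff_succ_iff_deriv.mp hf').2.2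
    rw [iteratedDeriv_succ', iteratedDeriv_succ']
    have hder : deriv (fun s => f s - p.eval s) = fun s => deriv f s - (derivative p).eval s := by
      funext s
      rw [deriv_fun_sub (hdf s) p.differentiableAt, Polynomial.deriv]
    rw [hder, ih (deriv f) hdg (derivative p) t, Function.iterate_succ_apply]

lemma my_rolle_finset (g : ℝ → ℝ) (hg : Differentiable ℝ g)
    (s : Finset ℝ) (hs : s.Nonempty) (hzero : ∀ y ∈ s, g y = 0) :
    ∃ t : Finset ℝ, t.card + 1 = s.card ∧ (∀ y ∈ t, deriv g y = 0) ∧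
      (∀ y ∈ t, y ∉ s) ∧ (∀ y ∈ t, ∃ a ∈ s, ∃ b ∈ s, a < y ∧ y < b) := by
  obtain ⟨m, hm⟩ := Nat.exists_eq_succ_of_ne_zero (Nat.pos_iff_ne_zero.mp hs.card_pos)
  set e := s.orderIsoOfFin hm with he
  have hlt : ∀ i : Fin m, ((e i.castSucc : s) : ℝ) < ((e i.succ : s) : ℝ) := fun i => by
    exact_mod_cast e.strictMono (Fin.castSucc_lt_succ : i.castSucc < i.succ)
  have hrolle : ∀ i : Fin m,
      ∃ c ∈ Set.Ioo ((e i.castSucc : s) : ℝ) ((e i.succ : s) : ℝ), deriv g c = 0 := fun i =>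
    exists_deriv_eq_zero (hlt i) hg.continuous.continuousOn
      (by rw [hzero _ (e i.castSucc).2, hzero _ (e i.succ).2])
  choose z hz hz0 using hrolle
  have hzmono : StrictMono z := by
    intro i j hij
    have h1 : z i < ((e i.succ : s) : ℝ) := (hz i).2
    have h2 : ((e j.castSucc : s) : ℝ) < z j := (hz j).1
    have h3 : i.succ ≤ j.castSucc := by
      simp only [Fin.le_def, Fin.val_succ, Fin.coe_castSucc]
      omega
    have h4 : ((e i.succ : s) : ℝ) ≤ ((e j.castSucc : s) : ℝ) := by
      exact_mod_cast e.monotone h3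
    linarith
  refine ⟨Finset.image z Finset.univ, ?_, ?_, ?_, ?_⟩
  · rw [Finset.card_image_of_injective _ hzmono.injective, Finset.card_univ, Fintype.card_fin, hm]
  · intro y hy
    obtain ⟨i, -, rfl⟩ := Finset.mem_image.mp hy
    exact hz0 i
  · intro y hy hys
    obtain ⟨i, -, rfl⟩ := Finset.mem_image.mp hy
    set l := e.symm ⟨z i, hys⟩ with hl
    have hel : e l = ⟨z i, hys⟩ := e.apply_symm_apply _
    have h1 : e i.castSucc < e l := by
      rw [hel]; exact_mod_cast (hz i).1
    have h2 : e l < e i.succ := by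
      rw [hel]; exact_mod_cast (hz i).2
    have h1' : i.castSucc < l := e.lt_iff_lt.mp h1
    have h2' : l < i.succ := e.lt_iff_lt.mp h2
    simp only [Fin.lt_def, Fin.val_succ, Fin.coe_castSucc] at h1' h2'
    omega
  · intro y hy
    obtain ⟨i, -, rfl⟩ := Finset.mem_image.mp hy
    exact ⟨_, (e i.castSucc).2, _, (e i.succ).2, (hz i).1, (hz i).2⟩

lemma my_key : ∀ (n : ℕ) (g : ℝ → ℝ), ContDiff ℝ n g → ∀ (s : Finset ℝ),
    n + 1 ≤ s.card → (∀ y ∈ s, g y = 0) →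
    ∃ ξ, (∃ a ∈ s, a ≤ ξ) ∧ (∃ b ∈ s, ξ ≤ b) ∧ iteratedDeriv n g ξ = 0 := by
  intro n
  induction n with
  | zero =>
    intro g hg s hcard hzero
    have hs : 0 < s.card := by omega
    obtain ⟨a, ha⟩ := Finset.card_pos.mp hs
    exact ⟨a, ⟨a, ha, le_rfl⟩, ⟨a, ha, le_rfl⟩, by simpa using hzero a ha⟩
  | succ n ih =>
    intro g hg s hcard hzero
    have hg' : ContDiff ℝ ((n : WithTop ℕ∞) + 1) g := by exact_mod_cast hg
    have hdg : Differentiable ℝ g := hg'.differentiable (by exact_mod_cast n.succ_ne_zero)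
    have hs : s.Nonempty := Finset.card_pos.mp (by omega)
    obtain ⟨t, htcard, htz, -, htbd⟩ := my_rolle_finset g hdg s hs hzero
    obtain ⟨ξ, ⟨a, hat, haξ⟩, ⟨b, hbt, hξb⟩, hξ0⟩ :=
      ih (deriv g) (contDiff_succ_iff_deriv.mp hg').2.2 t (by omega) htz
    obtain ⟨a', ha's, -, -, ha'a, -⟩ := htbd a hat
    obtain ⟨-, -, b', hb's, -, hbb'⟩ := htbd b hbt
    exact ⟨ξ, ⟨a', ha's, le_trans ha'a.le haξ⟩, ⟨b', hb's, le_trans hξb hbb'.le⟩,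
      by rw [iteratedDeriv_succ']; exact hξ0⟩

/-- Mean value theorem for several zeros: if `f` is `k` times continuously differentiable
and vanishes at `k` distinct points `x₁, …, x_k`, then there is
`ξ ∈ [min_j x_j, max_j x_j]` with
`f'(x₁) = f^{(k)}(ξ)/k! · ∏_{j=2}^k (x₁ - x_j)`. -/
theorem statement9 (k : ℕ) (hk : 1 ≤ k) (x : Fin k → ℝ) (hx : Function.Injective x)
    (f : ℝ → ℝ) (hf : ContDiff ℝ k f) (hzero : ∀ j, f (x j) = 0) :
    ∃ ξ : ℝ, (⨅ j, x j) ≤ ξ ∧ ξ ≤ (⨆ j, x j) ∧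
      deriv f (x ⟨0, hk⟩) =
        iteratedDeriv k f ξ / (Nat.factorial k) *
          ∏ j ∈ Finset.univ.erase (⟨0, hk⟩ : Fin k), (x ⟨0, hk⟩ - x j) := by
  classical
  set j₀ : Fin k := ⟨0, hk⟩ with hj₀
  set P₀ : ℝ := ∏ j ∈ Finset.univ.erase j₀, (x j₀ - x j) with hP₀def
  have hP₀ : P₀ ≠ 0 := by
    rw [hP₀def]
    refine Finset.prod_ne_zero_iff.mpr fun j hj => sub_ne_zero.mpr fun h => ?_
    exact (Finset.mem_erase.mp hj).1 (hx h).symm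
  set c : ℝ := deriv f (x j₀) / P₀ with hcdef
  set Q : Polynomial ℝ := ∏ j : Fin k, (Polynomial.X - Polynomial.C (x j)) with hQdef
  have hQmonic : Q.Monic := Polynomial.monic_prod_of_monic _ _ fun j _ => Polynomial.monic_X_sub_C _
  have hQdeg : Q.natDegree = k := by
    rw [hQdef, Polynomial.natDegree_prod_of_monic _ _ fun j _ => Polynomial.monic_X_sub_C _]
    simp [Polynomial.natDegree_X_sub_C]
  have hQiter : Polynomial.derivative^[k] Q = Polynomial.C ((k.factorial : ℝ)) := by
    have hdeg : (Polynomial.derivative^[k] Q).natDegree = 0 :=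
      Nat.le_zero.mp (by simpa [hQdeg] using Q.natDegree_iterate_derivative k)
    have := Polynomial.eq_C_of_natDegree_le_zero hdeg.le
    rw [this, Polynomial.coeff_iterate_derivative]
    congr 1
    simp [Nat.descFactorial_self, ← hQdeg, hQmonic.coeff_natDegree, nsmul_eq_mul]
  have hQzero : ∀ j, Q.eval (x j) = 0 := fun j => by
    rw [hQdef, Polynomial.eval_prod]
    exact Finset.prod_eq_zero (Finset.mem_univ j) (by simp)
  have hQ' : (Polynomial.derivative Q).eval (x j₀) = P₀ := by
    have hsplit : Q = (Polynomial.X - Polynomial.C (x j₀)) *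
        ∏ j ∈ Finset.univ.erase j₀, (Polynomial.X - Polynomial.C (x j)) := by
      rw [hQdef]
      exact (Finset.mul_prod_erase Finset.univ _ (Finset.mem_univ j₀)).symm
    rw [hsplit, Polynomial.derivative_mul]
    simp [Polynomial.eval_prod, hP₀def]
  set R : Polynomial ℝ := Polynomial.C c * Q with hRdef
  set g : ℝ → ℝ := fun t => f t - R.eval t with hgdef
  have hg : ContDiff ℝ k g := hf.sub (my_contDiff_eval R)
  have hk1 : (k : WithTop ℕ∞) ≠ 0 := by exact_mod_cast (by omega : k ≠ 0)
  have hdiffg : Differentiable ℝ g := hg.differentiable hk1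
  have hgzero : ∀ j, g (x j) = 0 := fun j => by
    simp [hgdef, hRdef, hzero j, hQzero j]
  have hderivg : deriv g (x j₀) = 0 := by
    have : deriv g (x j₀) = deriv f (x j₀) - (Polynomial.derivative R).eval (x j₀) := by
      rw [hgdef, deriv_fun_sub ((hf.differentiable hk1) _) R.differentiableAt, Polynomial.deriv]
    rw [this, hRdef, Polynomial.derivative_C_mul, Polynomial.eval_mul, Polynomial.eval_C, hQ',
      hcdef, div_mul_cancel₀ _ hP₀, sub_self]
  -- the set of zeros of g
  set s₀ : Finset ℝ := Finset.image x Finset.univ with hs₀def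
  have hs₀card : s₀.card = k := by
    rw [hs₀def, Finset.card_image_of_injective _ hx, Finset.card_univ, Fintype.card_fin]
  have hs₀ne : s₀.Nonempty := ⟨x j₀, Finset.mem_image.mpr ⟨j₀, Finset.mem_univ _, rfl⟩⟩
  have hs₀zero : ∀ y ∈ s₀, g y = 0 := by
    intro y hy
    obtain ⟨j, -, rfl⟩ := Finset.mem_image.mp hy
    exact hgzero j
  obtain ⟨t, htcard, htz, htnotin, htbd⟩ := my_rolle_finset g hdiffg s₀ hs₀ne hs₀zero
  have hxj₀s₀ : x j₀ ∈ s₀ := Finset.mem_image.mpr ⟨j₀, Finset.mem_univ _, rfl⟩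
  have hxj₀t : x j₀ ∉ t := fun h => htnotin _ h hxj₀s₀
  set s₁ : Finset ℝ := insert (x j₀) t with hs₁def
  have hs₁card : s₁.card = k := by
    rw [hs₁def, Finset.card_insert_of_notMem hxj₀t, htcard, hs₀card]
  have hs₁zero : ∀ y ∈ s₁, deriv g y = 0 := by
    intro y hy
    rcases Finset.mem_insert.mp hy with rfl | hyt
    · exact hderivg
    · exact htz y hyt
  obtain ⟨m, hm⟩ : ∃ m, k = m + 1 := ⟨k - 1, by omega⟩
  have hg' : ContDiff ℝ m (deriv g) := by
    have h1 : ContDiff ℝ ((m : WithTop ℕ∞) + 1) g := by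
      rw [hm] at hg; exact_mod_cast hg
    exact (contDiff_succ_iff_deriv.mp h1).2.2
  obtain ⟨ξ, ⟨a, has₁, haξ⟩, ⟨b, hbs₁, hξb⟩, hξ0⟩ :=
    my_key m (deriv g) hg' s₁ (by omega) hs₁zero
  have hbddb : BddBelow (Set.range x) := (Set.finite_range x).bddBelow
  have hbdda : BddAbove (Set.range x) := (Set.finite_range x).bddAbove
  have hlow : ∀ y ∈ s₁, (⨅ j, x j) ≤ y := by
    intro y hy
    rcases Finset.mem_insert.mp hy with rfl | hyt
    · exact ciInf_le hbddb j₀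
    · obtain ⟨a', ha's₀, -, -, ha'y, -⟩ := htbd y hyt
      obtain ⟨j', -, rfl⟩ := Finset.mem_image.mp ha's₀
      exact le_trans (ciInf_le hbddb j') ha'y.le
  have hhigh : ∀ y ∈ s₁, y ≤ (⨆ j, x j) := by
    intro y hy
    rcases Finset.mem_insert.mp hy with rfl | hyt
    · exact le_ciSup hbdda j₀
    · obtain ⟨-, -, b', hb's₀, -, hyb'⟩ := htbd y hyt
      obtain ⟨j', -, rfl⟩ := Finset.mem_image.mp hb's₀
      exact le_trans hyb'.le (le_ciSup hbdda j')
  refine ⟨ξ, le_trans (hlow a has₁) haξ, le_trans hξb (hhigh b hbs₁), ?_⟩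
  have hgk : iteratedDeriv k g ξ = 0 := by
    rw [hm, iteratedDeriv_succ']; exact hξ0
  have hcomp : iteratedDeriv k g ξ = iteratedDeriv k f ξ - c * (k.factorial : ℝ) := by
    rw [hgdef]
    rw [my_iteratedDeriv_sub_poly k f hf R ξ]
    rw [hRdef, Polynomial.iterate_derivative_C_mul, hQiter]
    simp
  have hfk : iteratedDeriv k f ξ = c * (k.factorial : ℝ) := by
    have := hcomp.symm.trans hgk
    linarith
  rw [hfk]
  have hfac : (k.factorial : ℝ) ≠ 0 := Nat.cast_ne_zero.mpr k.factorial_ne_zero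
  rw [mul_div_assoc, div_self hfac, mul_one, hcdef, div_mul_cancel₀ _ hP₀]
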